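/- Let 0 < μ < L, κ = L/μ, and 0 < Δ < 1. Set h = 1/((4/Δ)(L − μ) + 2L), and let m be a positive integer with m ≥ 8(κ−1)/Δ² + 8κ/Δ + 2κ²/(κ−1). Then 1/(μ h (1 − 2Lh) m) + 2(L − μ)h/(1 − 2Lh) ≤ Δ. -/

import Mathlib

/-- ν = 0 case of Theorem 6 of the S2GD paper: with the stated stepsize `h`
and epoch length `m`, the contraction factor is at most `Δ`. -/
theorem s2gd_parameter_choice_nu_eq_zero
    {L μ κ Δ h : ℝ} (hμ : 0 < μ) (hμL : μ < L) (hκ : κ = L / μ)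
    (hΔ0 : 0 < Δ) (hΔ1 : Δ < 1)
    (hh : h = 1 / ((4 / Δ) * (L - μ) + 2 * L))
    {m : ℕ} (hm1 : 1 ≤ m)
    (hm : 8 * (κ - 1) / Δ ^ 2 + 8 * κ / Δ + 2 * κ ^ 2 / (κ - 1) ≤ (m : ℝ)) :
    1 / (μ * h * (1 - 2 * L * h) * m) + 2 * (L - μ) * h / (1 - 2 * L * h) ≤ Δ := by
  have hLμ : (0:ℝ) < L - μ := by linarith
  have hL : (0:ℝ) < L := by linarith
  have hΔne : Δ ≠ 0 := ne_of_gt hΔ0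
  have hm0 : (0:ℝ) < m := by exact_mod_cast Nat.lt_of_lt_of_le Nat.zero_lt_one hm1
  set D : ℝ := (4 / Δ) * (L - μ) + 2 * L with hDdef
  have hD : 0 < D := by positivity
  have hkeyeq : (8 * (κ - 1) / Δ ^ 2 + 8 * κ / Δ + 2 * κ ^ 2 / (κ - 1)) * (2 * μ * (L - μ))
      = D ^ 2 := by
    subst hκ
    have hκ1 : L / μ - 1 ≠ 0 := by
      rw [div_sub_one hμ.ne']
      exact div_ne_zero hLμ.ne' hμ.ne'
    field_simp [hDdef]
    rw [hDdef]; field_simp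
    ring
  have hkey : D ^ 2 ≤ 2 * μ * (L - μ) * m := by
    have := mul_le_mul_of_nonneg_right hm (by positivity : (0:ℝ) ≤ 2 * μ * (L - μ))
    rw [hkeyeq] at this
    linarith
  subst hh
  have h2 : 1 - 2 * L * (1 / D) = (4 * (L - μ) / Δ) / D := by
    rw [hDdef]
    field_simp
    ring
  rw [h2]
  have hsecond : 2 * (L - μ) * (1 / D) / ((4 * (L - μ) / Δ) / D) = Δ / 2 := by
    field_simp
    ring
  rw [hsecond]
  have hdenpos : 0 < μ * (1 / D) * ((4 * (L - μ) / Δ) / D) * m := by positivity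
  have hfirst : 1 / (μ * (1 / D) * ((4 * (L - μ) / Δ) / D) * m) ≤ Δ / 2 := by
    rw [div_le_iff₀ hdenpos]
    have hexp : Δ / 2 * (μ * (1 / D) * ((4 * (L - μ) / Δ) / D) * m)
        = 2 * μ * (L - μ) * m / D ^ 2 := by
      field_simp
      ring
    rw [hexp, le_div_iff₀ (by positivity : (0:ℝ) < D ^ 2)]
    linarith
  linarith
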